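/- Let d_A, d_M, d_B ≥ 1 be natural numbers. Let Z_A and Z_A' be positive semidefinite complex matrices of size d_A × d_A, let Z_B be a positive semidefinite complex matrix of size d_B × d_B, and let U be a unitary complex matrix indexed by Fin d_A × Fin d_M such that U†·(Z_A' ⊗ I_M)·U ⪯ Z_A ⊗ I_M, where I_M is the d_M × d_M identity. Then for every vector ψ indexed by Fin d_A × Fin d_M × Fin d_B, Re⟨ψ, (Z_A ⊗ I_M ⊗ Z_B)·ψ⟩ ≥ Re⟨φ, (Z_A' ⊗ I_M ⊗ Z_B)·φ⟩, where φ = (U ⊗ I_B)·ψ and I_B is the d_B × d_B identity. (This is the monotonicity step F_j ≥ F_{j+1} in Kitaev's lower-bound argument for a round in which Alice moves; the analogous statement with the roles of the first and third tensor factors exchanged covers Bob's moves.) -/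

import Mathlib

open Matrix Kronecker
open scoped ComplexOrder

/-- The triple Kronecker product `A ⊗ B ⊗ C` on `ℂ^{d_A} ⊗ ℂ^{d_M} ⊗ ℂ^{d_B}`. -/
noncomputable def tk {dA dM dB : ℕ} (A : Matrix (Fin dA) (Fin dA) ℂ)
    (B : Matrix (Fin dM) (Fin dM) ℂ) (C : Matrix (Fin dB) (Fin dB) ℂ) :
    Matrix (Fin dA × Fin dM × Fin dB) (Fin dA × Fin dM × Fin dB) ℂ :=
  fun p q => A p.1 q.1 * B p.2.1 q.2.1 * C p.2.2 q.2.2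

/-- The extension `U ⊗ I_B` of a matrix `U` on `ℂ^{d_A} ⊗ ℂ^{d_M}` acting as
identity on `ℂ^{d_B}`. -/
noncomputable def extA {dA dM : ℕ} (dB : ℕ)
    (U : Matrix (Fin dA × Fin dM) (Fin dA × Fin dM) ℂ) :
    Matrix (Fin dA × Fin dM × Fin dB) (Fin dA × Fin dM × Fin dB) ℂ :=
  fun p q => if p.2.2 = q.2.2 then U (p.1, p.2.1) (q.1, q.2.1) else 0

lemma kron_conjTranspose {m n : Type*} (A : Matrix m m ℂ) (B : Matrix n n ℂ) :
    (A ⊗ₖ B)ᴴ = Aᴴ ⊗ₖ Bᴴ := by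
  ext ⟨i, j⟩ ⟨k, l⟩
  simp [conjTranspose_apply, kroneckerMap_apply, mul_comm]

lemma kron_posSemidef {m n : Type*} [Fintype m] [Fintype n] [DecidableEq m] [DecidableEq n]
    {A : Matrix m m ℂ} {B : Matrix n n ℂ}
    (hA : A.PosSemidef) (hB : B.PosSemidef) : (A ⊗ₖ B).PosSemidef := by
  exact hA.kronecker hB

lemma quad_form {n : Type*} [Fintype n] (X M : Matrix n n ℂ) (ψ : n → ℂ) :
    star ψ ⬝ᵥ (Xᴴ * M * X).mulVec ψ =
      star (X.mulVec ψ) ⬝ᵥ M.mulVec (X.mulVec ψ) := by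
  rw [star_mulVec]
  simp only [dotProduct_mulVec, vecMul_vecMul, Matrix.mul_assoc]

/-- Monotonicity step in Kitaev's lower bound (a round in which Alice moves):
if `U†·(Z_A' ⊗ I_M)·U ⪯ Z_A ⊗ I_M`, then
`Re⟨ψ, (Z_A ⊗ I_M ⊗ Z_B)ψ⟩ ≥ Re⟨(U ⊗ I_B)ψ, (Z_A' ⊗ I_M ⊗ Z_B)(U ⊗ I_B)ψ⟩`. -/
theorem stmt_7 (dA dM dB : ℕ) (hdA : 1 ≤ dA) (hdM : 1 ≤ dM) (hdB : 1 ≤ dB)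
    (ZA ZA' : Matrix (Fin dA) (Fin dA) ℂ) (ZB : Matrix (Fin dB) (Fin dB) ℂ)
    (hZA : ZA.PosSemidef) (hZA' : ZA'.PosSemidef) (hZB : ZB.PosSemidef)
    (U : Matrix (Fin dA × Fin dM) (Fin dA × Fin dM) ℂ)
    (hU : U ∈ Matrix.unitaryGroup (Fin dA × Fin dM) ℂ)
    (hstep : (ZA ⊗ₖ (1 : Matrix (Fin dM) (Fin dM) ℂ) -
      Uᴴ * (ZA' ⊗ₖ (1 : Matrix (Fin dM) (Fin dM) ℂ)) * U).PosSemidef)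
    (ψ : Fin dA × Fin dM × Fin dB → ℂ) :
    (star ψ ⬝ᵥ (tk ZA 1 ZB).mulVec ψ).re ≥
    (star ((extA dB U).mulVec ψ) ⬝ᵥ
      (tk ZA' 1 ZB).mulVec ((extA dB U).mulVec ψ)).re := by
  set f : Fin dA × Fin dM × Fin dB → (Fin dA × Fin dM) × Fin dB :=
    fun p => ((p.1, p.2.1), p.2.2) with hf
  have htk : ∀ (A : Matrix (Fin dA) (Fin dA) ℂ) (C : Matrix (Fin dB) (Fin dB) ℂ),
      tk A 1 C = ((A ⊗ₖ (1 : Matrix (Fin dM) (Fin dM) ℂ)) ⊗ₖ C).submatrix f f := by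
    intro A C
    ext p q
    simp [tk, submatrix_apply, kroneckerMap_apply, hf]
  have hX : extA dB U =
      (U ⊗ₖ (1 : Matrix (Fin dB) (Fin dB) ℂ)).submatrix f f := by
    ext p q
    by_cases h : p.2.2 = q.2.2 <;>
      simp [extA, submatrix_apply, kroneckerMap_apply, hf, Matrix.one_apply, h]
  -- bijectivity of f
  have hfb : Function.Bijective f := by
    constructor
    · intro p q h
      simp only [hf, Prod.mk.injEq] at h
      exact Prod.ext h.1.1 (Prod.ext h.1.2 h.2)
    · intro q; exact ⟨(q.1.1, q.1.2, q.2), rfl⟩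
  let e : (Fin dA × Fin dM × Fin dB) ≃ ((Fin dA × Fin dM) × Fin dB) :=
    Equiv.ofBijective f hfb
  have hfe : f = e := rfl
  -- the conjugated matrix
  have key : (extA dB U)ᴴ * tk ZA' 1 ZB * extA dB U =
      ((Uᴴ * (ZA' ⊗ₖ (1 : Matrix (Fin dM) (Fin dM) ℂ)) * U) ⊗ₖ ZB).submatrix f f := by
    rw [hX, htk, conjTranspose_submatrix, hfe, submatrix_mul_equiv, submatrix_mul_equiv]
    congr 1
    rw [show (Uᴴ * (ZA' ⊗ₖ (1 : Matrix (Fin dM) (Fin dM) ℂ)) * U) ⊗ₖ ZB =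
        ((Uᴴ * (ZA' ⊗ₖ (1 : Matrix (Fin dM) (Fin dM) ℂ))) * U) ⊗ₖ
          (((1 : Matrix (Fin dB) (Fin dB) ℂ) * ZB) * (1 : Matrix (Fin dB) (Fin dB) ℂ)) by
        rw [Matrix.one_mul, Matrix.mul_one],
      Matrix.mul_kronecker_mul, Matrix.mul_kronecker_mul, kron_conjTranspose,
      conjTranspose_one]
  -- the difference matrix is PSD
  have hS : (tk ZA 1 ZB - (extA dB U)ᴴ * tk ZA' 1 ZB * extA dB U).PosSemidef := by
    rw [key, htk]
    have hsub : ((ZA ⊗ₖ (1 : Matrix (Fin dM) (Fin dM) ℂ)) ⊗ₖ ZB).submatrix f f -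
        ((Uᴴ * (ZA' ⊗ₖ (1 : Matrix (Fin dM) (Fin dM) ℂ)) * U) ⊗ₖ ZB).submatrix f f =
        (((ZA ⊗ₖ (1 : Matrix (Fin dM) (Fin dM) ℂ)) -
          Uᴴ * (ZA' ⊗ₖ (1 : Matrix (Fin dM) (Fin dM) ℂ)) * U) ⊗ₖ ZB).submatrix f f := by
      ext p q
      simp [submatrix_apply, kroneckerMap_apply, sub_mul]
    rw [hsub]
    exact (kron_posSemidef hstep hZB).submatrix f
  have h0 := hS.dotProduct_mulVec_nonneg ψ
  have hre : 0 ≤ (star ψ ⬝ᵥ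
      (tk ZA 1 ZB - (extA dB U)ᴴ * tk ZA' 1 ZB * extA dB U).mulVec ψ).re := by
    rw [Complex.le_def] at h0
    simpa using h0.1
  rw [Matrix.sub_mulVec, dotProduct_sub, Complex.sub_re] at hre
  rw [quad_form] at hre
  linarith
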